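/- arXiv:0906.2388 — 2 statements merged into one kernel-verified Lean document; each statement's English description precedes it below -/
import Mathlib

section
/- Let P be a generic convex polygon with n ≥ 5 vertices and let V_i be a globally minimal-extremal vertex of P. Let P′ be the polygon obtained from P by removing the vertex V_i and joining V_{i-1} and V_{i+1} by an edge. Then either s_+(P) = s_+(P′) or s_+(P) = s_+(P′) + 1. -/
open EuclideanGeometry
open scoped Classical

noncomputable section

/-- The Euclidean plane. -/
abbrev Pt := EuclideanSpace ℝ (Fin 2)

/-- Signed area determinant of the triangle `a b c` (positive iff `a b c` is
counterclockwise, i.e. `c` lies strictly to the left of the directed line `a → b`). -/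
def det2 (a b c : Pt) : ℝ :=
  (b 0 - a 0) * (c 1 - a 1) - (b 1 - a 1) * (c 0 - a 0)

/-- The vertices `V 0, V 1, …, V (n-1)` (indices mod `n`) are distinct and in convex
position, listed counterclockwise: every other vertex lies strictly to the left of
each directed edge. -/
def ConvexCCW {n : ℕ} (V : ZMod n → Pt) : Prop :=
  Function.Injective V ∧
    ∀ i j : ZMod n, j ≠ i → j ≠ i + 1 → 0 < det2 (V i) (V (i + 1)) (V j)

/-- The polygon is generic: no three vertices are collinear and no four vertices lie
on a common circle. -/
def GenericPoly {n : ℕ} (V : ZMod n → Pt) : Prop :=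
  (∀ i j k : ZMod n, i ≠ j → j ≠ k → i ≠ k →
      ¬ Collinear ℝ ({V i, V j, V k} : Set Pt)) ∧
  (∀ i j k l : ZMod n, i ≠ j → i ≠ k → i ≠ l → j ≠ k → j ≠ l → k ≠ l →
      ¬ ∃ (O : Pt) (R : ℝ),
        dist (V i) O = R ∧ dist (V j) O = R ∧ dist (V k) O = R ∧ dist (V l) O = R)

/-- `O i` is the center and `R i` the radius of the circle `C i` through
`V (i-1)`, `V i`, `V (i+1)`. -/
def IsCircumData {n : ℕ} (V O : ZMod n → Pt) (R : ZMod n → ℝ) : Prop :=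
  ∀ i : ZMod n,
    dist (V (i - 1)) (O i) = R i ∧ dist (V i) (O i) = R i ∧
      dist (V (i + 1)) (O i) = R i

/-- The polygon is coherent: each circumcenter `O i` lies in the closed infinite cone
with apex `V i` spanned by the rays from `V i` through `V (i-1)` and `V (i+1)`. -/
def Coherent {n : ℕ} (V O : ZMod n → Pt) : Prop :=
  ∀ i : ZMod n, ∃ s t : ℝ, 0 ≤ s ∧ 0 ≤ t ∧
    O i - V i = s • (V (i - 1) - V i) + t • (V (i + 1) - V i)

/-- `V i` is locally maximal-extremal: `V (i-2)` and `V (i+2)` lie strictly outside `C i`. -/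
def LocMax {n : ℕ} (V O : ZMod n → Pt) (R : ZMod n → ℝ) (i : ZMod n) : Prop :=
  R i < dist (V (i - 2)) (O i) ∧ R i < dist (V (i + 2)) (O i)

/-- `V i` is locally minimal-extremal: `V (i-2)` and `V (i+2)` lie strictly inside `C i`. -/
def LocMin {n : ℕ} (V O : ZMod n → Pt) (R : ZMod n → ℝ) (i : ZMod n) : Prop :=
  dist (V (i - 2)) (O i) < R i ∧ dist (V (i + 2)) (O i) < R i

/-- `V i` is globally maximal-extremal: the open disk bounded by `C i` contains no vertex. -/
def GlobMax {n : ℕ} (V O : ZMod n → Pt) (R : ZMod n → ℝ) (i : ZMod n) : Prop :=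
  ∀ j : ZMod n, R i ≤ dist (V j) (O i)

/-- `V i` is globally minimal-extremal: the open disk bounded by `C i` contains every
vertex other than `V (i-1)`, `V i`, `V (i+1)`. -/
def GlobMin {n : ℕ} (V O : ZMod n → Pt) (R : ZMod n → ℝ) (i : ZMod n) : Prop :=
  ∀ j : ZMod n, j ≠ i - 1 → j ≠ i → j ≠ i + 1 → dist (V j) (O i) < R i

/-- `V i` is radially maximal-extremal: `R (i-1) < R i > R (i+1)`. -/
def RadMax {n : ℕ} (R : ZMod n → ℝ) (i : ZMod n) : Prop :=
  R (i - 1) < R i ∧ R (i + 1) < R i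

/-- `V i` is radially minimal-extremal: `R (i-1) > R i < R (i+1)`. -/
def RadMin {n : ℕ} (R : ZMod n → ℝ) (i : ZMod n) : Prop :=
  R i < R (i - 1) ∧ R i < R (i + 1)

end

noncomputable section

/-- The polygon obtained from `V` by deleting the vertex `V i` and joining `V (i-1)`
to `V (i+1)`; its vertices, listed in order, are `V (i+1), V (i+2), …, V (i+n-1)`. -/
def removeVertex {n : ℕ} [NeZero n] (V : ZMod n → Pt) (i : ZMod n) :
    ZMod (n - 1) → Pt :=
  fun j => V (i + 1 + (j.val : ZMod n))

end

noncomputable section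

def powDiff (Om Oi : Pt) (Rm Ri : ℝ) (X : Pt) : ℝ :=
  ((X 0 - Om 0)^2 + (X 1 - Om 1)^2 - Rm^2) - ((X 0 - Oi 0)^2 + (X 1 - Oi 1)^2 - Ri^2)

lemma pt_ext (p q : Pt) (h0 : p 0 = q 0) (h1 : p 1 = q 1) : p = q := by
  ext j; fin_cases j <;> assumption

lemma dist_sq (X O : Pt) : dist X O ^ 2 = (X 0 - O 0)^2 + (X 1 - O 1)^2 := by
  rw [EuclideanSpace.dist_eq, Real.sq_sqrt (by positivity)]
  simp [Fin.sum_univ_two, Real.dist_eq, sq_abs]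

lemma sq_of_dist_eq {X O : Pt} {R : ℝ} (h : dist X O = R) :
    (X 0 - O 0)^2 + (X 1 - O 1)^2 = R^2 := by rw [← dist_sq, h]

lemma sq_of_dist_lt {X O : Pt} {R : ℝ} (h : dist X O < R) :
    (X 0 - O 0)^2 + (X 1 - O 1)^2 < R^2 := by
  rw [← dist_sq]
  have h0 : (0:ℝ) ≤ dist X O := dist_nonneg
  nlinarith

lemma sq_of_dist_gt {X O : Pt} {R : ℝ} (hR : 0 ≤ R) (h : R < dist X O) :
    R^2 < (X 0 - O 0)^2 + (X 1 - O 1)^2 := by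
  rw [← dist_sq]; nlinarith

/-- main 4-point contradiction -/
lemma quadPt (P1 P2 P3 P4 Om Oi : Pt) (Rm Ri : ℝ)
    (hd1 : 0 < det2 P2 P3 P4) (hd2 : 0 < det2 P1 P3 P4)
    (hd3 : 0 < det2 P1 P2 P4) (hd4 : 0 < det2 P1 P2 P3)
    (h1 : powDiff Om Oi Rm Ri P1 < 0) (h2 : 0 ≤ powDiff Om Oi Rm Ri P2)
    (h3 : powDiff Om Oi Rm Ri P3 ≤ 0) (h4 : 0 ≤ powDiff Om Oi Rm Ri P4) : False := by
  have key : powDiff Om Oi Rm Ri P1 * det2 P2 P3 P4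
      - powDiff Om Oi Rm Ri P2 * det2 P1 P3 P4
      + powDiff Om Oi Rm Ri P3 * det2 P1 P2 P4
      - powDiff Om Oi Rm Ri P4 * det2 P1 P2 P3 = 0 := by
    simp only [powDiff, det2]; ring
  have t1 : powDiff Om Oi Rm Ri P1 * det2 P2 P3 P4 < 0 := mul_neg_of_neg_of_pos h1 hd1
  have t2 : 0 ≤ powDiff Om Oi Rm Ri P2 * det2 P1 P3 P4 := mul_nonneg h2 hd2.le
  have t3 : powDiff Om Oi Rm Ri P3 * det2 P1 P2 P4 ≤ 0 :=
    mul_nonpos_of_nonpos_of_nonneg h3 hd3.le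
  have t4 : 0 ≤ powDiff Om Oi Rm Ri P4 * det2 P1 P2 P3 := mul_nonneg h4 hd4.le
  linarith

lemma det2_cyclic (a b c : Pt) : det2 a b c = det2 b c a := by simp only [det2]; ring
lemma det2_swap23 (a b c : Pt) : det2 a b c = - det2 a c b := by simp only [det2]; ring

lemma det2_eq_zero_collinear {A B C : Pt} (h : det2 A B C = 0) :
    Collinear ℝ ({A, B, C} : Set Pt) := by
  by_cases hAB : A = B
  · subst hAB
    have : ({A, A, C} : Set Pt) = {A, C} := by simp
    rw [this]; exact collinear_pair ℝ A C
  · have hne : A 0 ≠ B 0 ∨ A 1 ≠ B 1 := by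
      by_contra hc; push_neg at hc; exact hAB (pt_ext _ _ hc.1 hc.2)
    rw [collinear_iff_of_mem (Set.mem_insert A {B, C})]
    refine ⟨B - A, ?_⟩
    intro p hp
    rcases hp with rfl | rfl | rfl
    · exact ⟨0, by simp⟩
    · exact ⟨1, by simp⟩
    · rcases hne with h0 | h0
      · have hBA : B 0 - A 0 ≠ 0 := sub_ne_zero.mpr (Ne.symm h0)
        refine ⟨(p 0 - A 0)/(B 0 - A 0), pt_ext _ _ ?_ ?_⟩ <;>
          · simp only [det2] at h
            simp only [PiLp.smul_apply, PiLp.sub_apply, PiLp.add_apply, vadd_eq_add,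
              smul_eq_mul]
            field_simp
            try nlinarith [hBA]
      · have hBA : B 1 - A 1 ≠ 0 := sub_ne_zero.mpr (Ne.symm h0)
        refine ⟨(p 1 - A 1)/(B 1 - A 1), pt_ext _ _ ?_ ?_⟩ <;>
          · simp only [det2] at h
            simp only [PiLp.smul_apply, PiLp.sub_apply, PiLp.add_apply, vadd_eq_add,
              smul_eq_mul]
            field_simp
            try nlinarith [hBA]

/-- Uniqueness of circumcircle data for a non-collinear triple. -/
lemma circum_unique {A B C O1 O2 : Pt} {R1 R2 : ℝ}
    (hncol : ¬ Collinear ℝ ({A, B, C} : Set Pt))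
    (hA1 : dist A O1 = R1) (hB1 : dist B O1 = R1) (hC1 : dist C O1 = R1)
    (hA2 : dist A O2 = R2) (hB2 : dist B O2 = R2) (hC2 : dist C O2 = R2) :
    O1 = O2 ∧ R1 = R2 := by
  have hdet : det2 A B C ≠ 0 := fun h => hncol (det2_eq_zero_collinear h)
  have eA1 := sq_of_dist_eq hA1; have eB1 := sq_of_dist_eq hB1
  have eC1 := sq_of_dist_eq hC1; have eA2 := sq_of_dist_eq hA2
  have eB2 := sq_of_dist_eq hB2; have eC2 := sq_of_dist_eq hC2
  set w0 := O1 0 - O2 0 with hw0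
  set w1 := O1 1 - O2 1 with hw1
  have h1 : (B 0 - A 0) * w0 + (B 1 - A 1) * w1 = 0 := by
    simp only [hw0, hw1]; linear_combination (eA1 - eB1 - eA2 + eB2) / 2
  have h2 : (C 0 - A 0) * w0 + (C 1 - A 1) * w1 = 0 := by
    simp only [hw0, hw1]; linear_combination (eA1 - eC1 - eA2 + eC2) / 2
  have hd0 : det2 A B C * w0 = 0 := by
    simp only [det2]; linear_combination (C 1 - A 1) * h1 - (B 1 - A 1) * h2
  have hd1 : det2 A B C * w1 = 0 := by
    simp only [det2]; linear_combination (B 0 - A 0) * h2 - (C 0 - A 0) * h1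
  have hw0z : w0 = 0 := by
    rcases mul_eq_zero.mp hd0 with h | h
    · exact absurd h hdet
    · exact h
  have hw1z : w1 = 0 := by
    rcases mul_eq_zero.mp hd1 with h | h
    · exact absurd h hdet
    · exact h
  have hO : O1 = O2 := pt_ext _ _ (by linarith [hw0z]) (by linarith [hw1z])
  exact ⟨hO, by rw [← hA1, ← hA2, hO]⟩

lemma key_id (A B P Q : Pt) :
    ((B 0 - A 0)^2 + (B 1 - A 1)^2) * det2 A P Q
      = ((B 0 - A 0)*(P 0 - A 0) + (B 1 - A 1)*(P 1 - A 1)) * det2 A B Q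
        - det2 A B P * ((B 0 - A 0)*(Q 0 - A 0) + (B 1 - A 1)*(Q 1 - A 1)) := by
  simp only [det2]; ring

lemma chain {C : ℝ} (hC : 0 < C) (X Y : ℕ → ℝ) (D : ℕ → ℕ → ℝ) (N : ℕ)
    (hD : ∀ k l : ℕ, C * D k l = X k * Y l - Y k * X l)
    (hy : ∀ k : ℕ, 2 ≤ k → k ≤ N → 0 < Y k)
    (hstep : ∀ k : ℕ, 2 ≤ k → k + 1 ≤ N → 0 < D k (k+1))
    (t s : ℕ) (ht : 2 ≤ t) (hts : t < s) (hs : s ≤ N) : 0 < D t s := by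
  have mono : ∀ s' : ℕ, t + 1 ≤ s' → s' ≤ N → 0 < X t * Y s' - Y t * X s' := by
    intro s' hs'
    induction s', hs' using Nat.le_induction with
    | base =>
      intro hsN
      have h1 := hstep t ht (by omega)
      have h2 := mul_pos hC h1
      rw [hD] at h2; exact h2
    | succ l hl IH =>
      intro hlN
      have IH' := IH (by omega)
      have h1 := hstep l (by omega) (by omega)
      have h2 := mul_pos hC h1
      rw [hD] at h2
      have hyt := hy t ht (by omega)
      have hyl := hy l (by omega) (by omega)
      have hyl1 := hy (l+1) (by omega) (by omega)
      have hsum : Y l * (X t * Y (l+1) - Y t * X (l+1))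
          = (X t * Y l - Y t * X l) * Y (l+1) + (X l * Y (l+1) - Y l * X (l+1)) * Y t := by
        ring
      have h3 : 0 < Y l * (X t * Y (l+1) - Y t * X (l+1)) := by
        rw [hsum]; exact add_pos (mul_pos IH' hyl1) (mul_pos h2 hyt)
      by_contra hG
      push_neg at hG
      nlinarith [h3, mul_nonneg hyl.le (neg_nonneg.2 hG)]
  have hfin := mono s (by omega) hs
  rw [← hD] at hfin
  by_contra hG
  push_neg at hG
  nlinarith [hfin, mul_nonneg hC.le (neg_nonneg.2 hG)]

lemma natCast_inj_zmod {m : ℕ} [NeZero m] {p q : ℕ} (hp : p < m) (hq : q < m)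
    (h : (p : ZMod m) = q) : p = q := by
  have := congrArg ZMod.val h
  rwa [ZMod.val_cast_of_lt hp, ZMod.val_cast_of_lt hq] at this

lemma cp {n : ℕ} [NeZero n] (hn : 5 ≤ n) (V : ZMod n → Pt) (hconv : ConvexCCW V)
    (a : ZMod n) (t s : ℕ) (ht : 1 ≤ t) (hts : t < s) (hs : s ≤ n - 1) :
    0 < det2 (V a) (V (a + (t : ZMod n))) (V (a + (s : ZMod n))) := by
  obtain ⟨hinj, hedge⟩ := hconv
  have hne : ∀ p q : ℕ, p < n → q < n → p ≠ q →
      a + (p : ZMod n) ≠ a + (q : ZMod n) := by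
    intro p q hp hq hpq h
    exact hpq (natCast_inj_zmod hp hq (by exact add_left_cancel h))
  have E : ∀ p q : ℕ, p + 1 ≤ n - 1 → q ≤ n - 1 → q ≠ p → q ≠ p + 1 →
      0 < det2 (V (a + (p : ZMod n))) (V (a + ((p+1 : ℕ) : ZMod n)))
        (V (a + (q : ZMod n))) := by
    intro p q hp hq hqp hqp1
    have h1 : a + ((p+1 : ℕ) : ZMod n) = a + (p : ZMod n) + 1 := by push_cast; ring
    rw [h1]
    exact hedge (a + (p : ZMod n)) (a + (q : ZMod n))
      (hne q p (by omega) (by omega) hqp)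
      (by rw [← h1]; exact hne q (p+1) (by omega) (by omega) hqp1)
  have ha0 : V (a + ((0:ℕ) : ZMod n)) = V a := by norm_num
  rcases Nat.lt_or_ge t 2 with ht1 | ht2
  · -- t = 1
    have ht1' : t = 1 := by omega
    subst ht1'
    have := E 0 s (by omega) hs (by omega) (by omega)
    rw [ha0] at this
    simpa using this
  · -- t ≥ 2 : use chain
    have hW01 : V (a + ((0:ℕ) : ZMod n)) ≠ V (a + ((1:ℕ) : ZMod n)) := by
      intro h; exact (hne 0 1 (by omega) (by omega) (by omega)) (hinj h)
    have hCpos : 0 < (V (a + ((1:ℕ) : ZMod n)) 0 - V (a + ((0:ℕ) : ZMod n)) 0)^2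
        + (V (a + ((1:ℕ) : ZMod n)) 1 - V (a + ((0:ℕ) : ZMod n)) 1)^2 := by
      have hor : V (a + ((1:ℕ) : ZMod n)) 0 - V (a + ((0:ℕ) : ZMod n)) 0 ≠ 0 ∨
          V (a + ((1:ℕ) : ZMod n)) 1 - V (a + ((0:ℕ) : ZMod n)) 1 ≠ 0 := by
        by_contra hcc; push_neg at hcc
        exact hW01 (pt_ext _ _ (by linarith [hcc.1]) (by linarith [hcc.2]))
      rcases hor with h | h
      · nlinarith [pow_two_pos_of_ne_zero h,
          sq_nonneg (V (a + ((1:ℕ) : ZMod n)) 1 - V (a + ((0:ℕ) : ZMod n)) 1)]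
      · nlinarith [pow_two_pos_of_ne_zero h,
          sq_nonneg (V (a + ((1:ℕ) : ZMod n)) 0 - V (a + ((0:ℕ) : ZMod n)) 0)]
    have main := chain hCpos
      (fun k => (V (a + ((1:ℕ) : ZMod n)) 0 - V (a + ((0:ℕ) : ZMod n)) 0)
            * (V (a + (k : ZMod n)) 0 - V (a + ((0:ℕ) : ZMod n)) 0)
        + (V (a + ((1:ℕ) : ZMod n)) 1 - V (a + ((0:ℕ) : ZMod n)) 1)
            * (V (a + (k : ZMod n)) 1 - V (a + ((0:ℕ) : ZMod n)) 1))
      (fun k => det2 (V (a + ((0:ℕ) : ZMod n))) (V (a + ((1:ℕ) : ZMod n)))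
          (V (a + (k : ZMod n))))
      (fun k l => det2 (V (a + ((0:ℕ) : ZMod n))) (V (a + (k : ZMod n)))
          (V (a + (l : ZMod n)))) (n - 1)
      (fun k l => key_id (V (a + ((0:ℕ) : ZMod n))) (V (a + ((1:ℕ) : ZMod n)))
          (V (a + (k : ZMod n))) (V (a + (l : ZMod n))))
      ?hy ?hstep t s ht2 hts hs
    · have main' : 0 < det2 (V (a + ((0:ℕ) : ZMod n))) (V (a + (t : ZMod n)))
          (V (a + (s : ZMod n))) := main
      rwa [ha0] at main'
    case hy =>
      intro k h2 hk
      show 0 < det2 (V (a + ((0:ℕ) : ZMod n))) (V (a + ((1:ℕ) : ZMod n)))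
          (V (a + (k : ZMod n)))
      have := E 0 k (by omega) hk (by omega) (by omega)
      simpa using this
    case hstep =>
      intro k h2 hk1
      show 0 < det2 (V (a + ((0:ℕ) : ZMod n))) (V (a + ((k : ℕ) : ZMod n)))
          (V (a + (((k+1) : ℕ) : ZMod n)))
      rw [det2_cyclic]
      exact E k 0 hk1 (by omega) (by omega) (by omega)


end


/-- Removing a globally minimal-extremal vertex from a generic convex polygon with
`n ≥ 5` vertices loses at most the count of that one vertex:
`s₊(P) = s₊(P')` or `s₊(P) = s₊(P') + 1`. -/
theorem remove_globally_minimal_vertex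
    (n : ℕ) [NeZero n] [NeZero (n - 1)] (hn : 5 ≤ n)
    (V O : ZMod n → Pt) (R : ZMod n → ℝ)
    (hconv : ConvexCCW V) (hgen : GenericPoly V) (hcirc : IsCircumData V O R)
    (i : ZMod n) (hi : GlobMin V O R i)
    (O' : ZMod (n - 1) → Pt) (R' : ZMod (n - 1) → ℝ)
    (hcirc' : IsCircumData (removeVertex V i) O' R') :
    {k : ZMod n | GlobMin V O R k}.ncard =
        {k : ZMod (n - 1) | GlobMin (removeVertex V i) O' R' k}.ncard ∨
    {k : ZMod n | GlobMin V O R k}.ncard =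
        {k : ZMod (n - 1) | GlobMin (removeVertex V i) O' R' k}.ncard + 1 := by
  obtain ⟨hinj, hedge⟩ := id hconv
  -- nonzero numerals in ZMod n and ZMod (n-1)
  have hnz : ∀ c : ℕ, 0 < c → c < n → ((c : ℕ) : ZMod n) ≠ 0 := by
    intro c hc hcn h
    have := (ZMod.natCast_eq_zero_iff c n).mp h
    exact absurd (Nat.le_of_dvd hc this) (by omega)
  have hnz' : ∀ c : ℕ, 0 < c → c < n - 1 → ((c : ℕ) : ZMod (n-1)) ≠ 0 := by
    intro c hc hcn h
    have := (ZMod.natCast_eq_zero_iff c (n-1)).mp h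
    exact absurd (Nat.le_of_dvd hc this) (by omega)
  have h1n : (1 : ZMod n) ≠ 0 := by have := hnz 1 (by omega) (by omega); simpa using this
  have h2n : (2 : ZMod n) ≠ 0 := by have := hnz 2 (by omega) (by omega); simpa using this
  have h3n : (3 : ZMod n) ≠ 0 := by have := hnz 3 (by omega) (by omega); simpa using this
  have h4n : (4 : ZMod n) ≠ 0 := by have := hnz 4 (by omega) (by omega); simpa using this
  have h1m : (1 : ZMod (n-1)) ≠ 0 := by
    have := hnz' 1 (by omega) (by omega); simpa using this
  have h2m : (2 : ZMod (n-1)) ≠ 0 := by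
    have := hnz' 2 (by omega) (by omega); simpa using this
  have h3m : (3 : ZMod (n-1)) ≠ 0 := by
    have := hnz' 3 (by omega) (by omega); simpa using this
  -- cast computations
  have hcn2 : ((n - 2 : ℕ) : ZMod n) = -2 := by
    have h : ((n - 2 : ℕ) : ZMod n) + ((2 : ℕ) : ZMod n) = 0 := by
      rw [← Nat.cast_add, show n - 2 + 2 = n by omega, ZMod.natCast_self]
    push_cast at h
    linear_combination h
  have hcn3 : ((n - 3 : ℕ) : ZMod n) = -3 := by
    have h : ((n - 3 : ℕ) : ZMod n) + ((3 : ℕ) : ZMod n) = 0 := by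
      rw [← Nat.cast_add, show n - 3 + 3 = n by omega, ZMod.natCast_self]
    push_cast at h
    linear_combination h
  have hcm2 : ((n - 2 : ℕ) : ZMod (n-1)) = -1 := by
    have h : ((n - 2 : ℕ) : ZMod (n-1)) + ((1 : ℕ) : ZMod (n-1)) = 0 := by
      rw [← Nat.cast_add, show n - 2 + 1 = n - 1 by omega, ZMod.natCast_self]
    push_cast at h
    linear_combination h
  have hcm3 : ((n - 3 : ℕ) : ZMod (n-1)) = -2 := by
    have h : ((n - 3 : ℕ) : ZMod (n-1)) + ((2 : ℕ) : ZMod (n-1)) = 0 := by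
      rw [← Nat.cast_add, show n - 3 + 2 = n - 1 by omega, ZMod.natCast_self]
    push_cast at h
    linear_combination h
  have hvneg1 : (-1 : ZMod (n-1)).val = n - 2 := by
    rw [← hcm2, ZMod.val_cast_of_lt (by omega)]
  have hvneg2 : (-2 : ZMod (n-1)).val = n - 3 := by
    rw [← hcm3, ZMod.val_cast_of_lt (by omega)]
  have hv1 : (1 : ZMod (n-1)).val = 1 := by
    rw [show (1 : ZMod (n-1)) = ((1 : ℕ) : ZMod (n-1)) by push_cast; ring,
      ZMod.val_cast_of_lt (by omega)]
  -- ψ : index map from new polygon to old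
  set ψ : ZMod (n-1) → ZMod n := fun k => i + 1 + (k.val : ZMod n) with hψ
  have hV' : ∀ k, removeVertex V i k = V (ψ k) := fun k => rfl
  have hψinj : Function.Injective ψ := by
    intro k k' h
    have h2 : ((k.val : ℕ) : ZMod n) = ((k'.val : ℕ) : ZMod n) := by
      simpa [hψ, add_right_inj] using h
    have h3 : k.val = k'.val :=
      natCast_inj_zmod (lt_trans (ZMod.val_lt k) (by omega))
        (lt_trans (ZMod.val_lt k') (by omega)) h2
    rw [← ZMod.natCast_zmod_val k, ← ZMod.natCast_zmod_val k', h3]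
  have hψ0 : ψ 0 = i + 1 := by simp [hψ, ZMod.val_zero]
  have hψ1 : ψ 1 = i + 2 := by
    show i + 1 + (((1 : ZMod (n-1)).val : ℕ) : ZMod n) = i + 2
    rw [hv1]; push_cast; ring
  have hψneg1 : ψ (-1) = i - 1 := by
    simp only [hψ, hvneg1, hcn2]; ring
  have hψneg2 : ψ (-2) = i - 2 := by
    simp only [hψ, hvneg2, hcn3]; ring
  have hval_ne : ∀ k : ZMod (n-1), k ≠ -1 → k.val ≠ n - 2 := by
    intro k hk h
    exact hk (by rw [← ZMod.natCast_zmod_val k, h, hcm2])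
  have hψsucc : ∀ k : ZMod (n-1), k ≠ -1 → ψ (k + 1) = ψ k + 1 := by
    intro k hk
    have hkv := hval_ne k hk
    have hlt := ZMod.val_lt k
    have h1 : k + 1 = ((k.val + 1 : ℕ) : ZMod (n-1)) := by
      rw [Nat.cast_add, Nat.cast_one, ZMod.natCast_zmod_val]
    have h2 : (k + 1).val = k.val + 1 := by
      rw [h1, ZMod.val_cast_of_lt (by omega)]
    show i + 1 + ((k+1).val : ZMod n) = i + 1 + (k.val : ZMod n) + 1
    rw [h2]; push_cast; ring
  have hψpred : ∀ k : ZMod (n-1), k ≠ 0 → ψ (k - 1) = ψ k - 1 := by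
    intro k hk
    have h1 : k - 1 ≠ -1 := by
      intro h; exact hk (by linear_combination h)
    have := hψsucc (k - 1) h1
    rw [sub_add_cancel] at this
    exact eq_sub_of_add_eq this.symm
  have hψne_i : ∀ k, ψ k ≠ i := by
    intro k h
    have h2 : ((k.val + 1 : ℕ) : ZMod n) = 0 := by
      push_cast
      simp only [hψ] at h
      linear_combination h
    exact hnz (k.val + 1) (by omega) (by have := ZMod.val_lt k; omega) h2
  have hψsurj : ∀ j : ZMod n, j ≠ i → ∃ k, ψ k = j := by
    intro j hj
    have hvlt : (j - (i + 1)).val < n := ZMod.val_lt _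
    have hvne : (j - (i + 1)).val ≠ n - 1 := by
      intro h
      apply hj
      have : ((n - 1 : ℕ) : ZMod n) = -1 := by
        have h' : ((n - 1 : ℕ) : ZMod n) + ((1 : ℕ) : ZMod n) = 0 := by
          rw [← Nat.cast_add, show n - 1 + 1 = n by omega, ZMod.natCast_self]
        push_cast at h'
        linear_combination h'
      have h2 : j - (i + 1) = -1 := by
        rw [← ZMod.natCast_zmod_val (j - (i+1)), h, this]
      linear_combination h2
    refine ⟨(((j - (i + 1)).val : ℕ) : ZMod (n-1)), ?_⟩
    show i + 1 + (((((j - (i + 1)).val : ℕ) : ZMod (n-1))).val : ZMod n) = j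
    rw [ZMod.val_cast_of_lt (by omega)]
    rw [ZMod.natCast_zmod_val (j - (i+1))]
    ring
  -- transfer of circum data for interior indices
  have hOR : ∀ k : ZMod (n-1), k ≠ 0 → k ≠ -1 → O' k = O (ψ k) ∧ R' k = R (ψ k) := by
    intro k hk0 hk1
    set m := ψ k with hm
    have e1 : removeVertex V i (k - 1) = V (m - 1) := by
      rw [hV', hψpred k hk0]
    have e2 : removeVertex V i k = V m := hV' k
    have e3 : removeVertex V i (k + 1) = V (m + 1) := by
      rw [hV', hψsucc k hk1]
    obtain ⟨c1, c2, c3⟩ := hcirc' k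
    rw [e1] at c1; rw [e2] at c2; rw [e3] at c3
    obtain ⟨d1, d2, d3⟩ := hcirc m
    have hne1 : m - 1 ≠ m := by
      intro h; exact h1n (by linear_combination -h)
    have hne2 : m ≠ m + 1 := by
      intro h; exact h1n (by linear_combination -h)
    have hne3 : m - 1 ≠ m + 1 := by
      intro h; exact h2n (by linear_combination -h)
    have hncol := hgen.1 (m-1) m (m+1) hne1 hne2 hne3
    have := circum_unique hncol d1 d2 d3 c1 c2 c3
    exact ⟨this.1.symm, this.2.symm⟩
  -- convenient cp wrapper
  have hcp := cp hn V hconv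
  -- V (i+1) is not globally minimal
  have hip1 : ¬ GlobMin V O R (i+1) := by
    intro h1
    have d1 : 0 < det2 (V i) (V (i+1)) (V (i+2)) := by
      refine hedge i (i+2) ?_ ?_
      · intro h; exact h2n (by linear_combination h)
      · intro h; exact h1n (by linear_combination h)
    have d2 : 0 < det2 (V (i-1)) (V (i+1)) (V (i+2)) := by
      have hd := hcp (i-1) 2 3 (by omega) (by omega) (by omega)
      rw [show (i-1) + ((2:ℕ):ZMod n) = i+1 by push_cast; ring,
        show (i-1) + ((3:ℕ):ZMod n) = i+2 by push_cast; ring] at hd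
      exact hd
    have d3 : 0 < det2 (V (i-1)) (V i) (V (i+2)) := by
      have hd := hcp (i-1) 1 3 (by omega) (by omega) (by omega)
      rw [show (i-1) + ((1:ℕ):ZMod n) = i by push_cast; ring,
        show (i-1) + ((3:ℕ):ZMod n) = i+2 by push_cast; ring] at hd
      exact hd
    have d4 : 0 < det2 (V (i-1)) (V i) (V (i+1)) := by
      have hd := hcp (i-1) 1 2 (by omega) (by omega) (by omega)
      rw [show (i-1) + ((1:ℕ):ZMod n) = i by push_cast; ring,
        show (i-1) + ((2:ℕ):ZMod n) = i+1 by push_cast; ring] at hd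
      exact hd
    -- circle data
    have cA := (hcirc i).1
    have cB := (hcirc i).2.1
    have cC := (hcirc i).2.2
    have cB' := (hcirc (i+1)).1
    rw [show i+1-1 = i by ring] at cB'
    have cC' := (hcirc (i+1)).2.1
    have cD' := (hcirc (i+1)).2.2
    rw [show i+1+1 = i+2 by ring] at cD'
    -- strict facts
    have q1 : dist (V (i-1)) (O (i+1)) < R (i+1) := by
      refine h1 (i-1) ?_ ?_ ?_
      · intro h; exact h1n (by linear_combination -h)
      · intro h; exact h2n (by linear_combination -h)
      · intro h; exact h3n (by linear_combination -h)
    have q4 : dist (V (i+2)) (O i) < R i := by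
      refine hi (i+2) ?_ ?_ ?_
      · intro h; exact h3n (by linear_combination h)
      · intro h; exact h2n (by linear_combination h)
      · intro h; exact h1n (by linear_combination h)
    refine quadPt (V (i-1)) (V i) (V (i+1)) (V (i+2)) (O (i+1)) (O i) (R (i+1)) (R i)
      d1 d2 d3 d4 ?_ ?_ ?_ ?_
    · have s1 := sq_of_dist_lt q1
      have s2 := sq_of_dist_eq cA
      simp only [powDiff]; linarith
    · have s1 := sq_of_dist_eq cB'
      have s2 := sq_of_dist_eq cB
      simp only [powDiff]; linarith
    · have s1 := sq_of_dist_eq cC'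
      have s2 := sq_of_dist_eq cC
      simp only [powDiff]; linarith
    · have s1 := sq_of_dist_eq cD'
      have s2 := sq_of_dist_lt q4
      simp only [powDiff]; linarith
  -- V (i-1) is not globally minimal
  have him1 : ¬ GlobMin V O R (i-1) := by
    intro h2
    have d1 : 0 < det2 (V (i-1)) (V i) (V (i+1)) := by
      have hd := hcp (i-1) 1 2 (by omega) (by omega) (by omega)
      rw [show (i-1) + ((1:ℕ):ZMod n) = i by push_cast; ring,
        show (i-1) + ((2:ℕ):ZMod n) = i+1 by push_cast; ring] at hd
      exact hd
    have d2 : 0 < det2 (V (i-2)) (V i) (V (i+1)) := by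
      have hd := hcp (i-2) 2 3 (by omega) (by omega) (by omega)
      rw [show (i-2) + ((2:ℕ):ZMod n) = i by push_cast; ring,
        show (i-2) + ((3:ℕ):ZMod n) = i+1 by push_cast; ring] at hd
      exact hd
    have d3 : 0 < det2 (V (i-2)) (V (i-1)) (V (i+1)) := by
      have hd := hcp (i-2) 1 3 (by omega) (by omega) (by omega)
      rw [show (i-2) + ((1:ℕ):ZMod n) = i-1 by push_cast; ring,
        show (i-2) + ((3:ℕ):ZMod n) = i+1 by push_cast; ring] at hd
      exact hd
    have d4 : 0 < det2 (V (i-2)) (V (i-1)) (V i) := by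
      have hd := hcp (i-2) 1 2 (by omega) (by omega) (by omega)
      rw [show (i-2) + ((1:ℕ):ZMod n) = i-1 by push_cast; ring,
        show (i-2) + ((2:ℕ):ZMod n) = i by push_cast; ring] at hd
      exact hd
    have cA := (hcirc i).1
    have cB := (hcirc i).2.1
    have cC := (hcirc i).2.2
    have cA' := (hcirc (i-1)).1
    rw [show i-1-1 = i-2 by ring] at cA'
    have cB' := (hcirc (i-1)).2.1
    have cC' := (hcirc (i-1)).2.2
    rw [show i-1+1 = i by ring] at cC'
    have q1 : dist (V (i-2)) (O i) < R i := by
      refine hi (i-2) ?_ ?_ ?_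
      · intro h; exact h1n (by linear_combination -h)
      · intro h; exact h2n (by linear_combination -h)
      · intro h; exact h3n (by linear_combination -h)
    have q4 : dist (V (i+1)) (O (i-1)) < R (i-1) := by
      refine h2 (i+1) ?_ ?_ ?_
      · intro h; exact h3n (by linear_combination h)
      · intro h; exact h2n (by linear_combination h)
      · intro h; exact h1n (by linear_combination h)
    refine quadPt (V (i-2)) (V (i-1)) (V i) (V (i+1)) (O i) (O (i-1)) (R i) (R (i-1))
      d1 d2 d3 d4 ?_ ?_ ?_ ?_
    · have s1 := sq_of_dist_lt q1
      have s2 := sq_of_dist_eq cA'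
      simp only [powDiff]; linarith
    · have s1 := sq_of_dist_eq cA
      have s2 := sq_of_dist_eq cB'
      simp only [powDiff]; linarith
    · have s1 := sq_of_dist_eq cB
      have s2 := sq_of_dist_eq cC'
      simp only [powDiff]; linarith
    · have s1 := sq_of_dist_eq cC
      have s2 := sq_of_dist_lt q4
      simp only [powDiff]; linarith
  -- values of the new polygon at special indices
  have e_m2 : removeVertex V i (-2) = V (i-2) := by rw [hV', hψneg2]
  have e_m1 : removeVertex V i (-1) = V (i-1) := by rw [hV', hψneg1]
  have e_0 : removeVertex V i 0 = V (i+1) := by rw [hV', hψ0]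
  have e_1 : removeVertex V i 1 = V (i+2) := by rw [hV', hψ1]
  -- not both endpoints of the gap are globally minimal in the new polygon
  have hboth : ¬ (GlobMin (removeVertex V i) O' R' 0 ∧
      GlobMin (removeVertex V i) O' R' (-1)) := by
    rintro ⟨h0, hm1'⟩
    have c01 := (hcirc' 0).1
    rw [show (0 : ZMod (n-1)) - 1 = -1 by ring, e_m1] at c01
    have c02 := (hcirc' 0).2.1
    rw [e_0] at c02
    have c03 := (hcirc' 0).2.2
    rw [show (0 : ZMod (n-1)) + 1 = 1 by ring, e_1] at c03
    have cm11 := (hcirc' (-1)).1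
    rw [show (-1 : ZMod (n-1)) - 1 = -2 by ring, e_m2] at cm11
    have cm12 := (hcirc' (-1)).2.1
    rw [e_m1] at cm12
    have cm13 := (hcirc' (-1)).2.2
    rw [show (-1 : ZMod (n-1)) + 1 = 0 by ring, e_0] at cm13
    have q1 : dist (V (i-2)) (O' 0) < R' 0 := by
      have := h0 (-2) ?_ ?_ ?_
      · rwa [e_m2] at this
      · intro h; exact h1m (by linear_combination -h)
      · intro h; exact h2m (by linear_combination -h)
      · intro h; exact h3m (by linear_combination -h)
    have q4 : dist (V (i+2)) (O' (-1)) < R' (-1) := by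
      have := hm1' 1 ?_ ?_ ?_
      · rwa [e_1] at this
      · intro h; exact h3m (by linear_combination h)
      · intro h; exact h2m (by linear_combination h)
      · intro h; exact h1m (by linear_combination h)
    have D1 : 0 < det2 (V (i-1)) (V (i+1)) (V (i+2)) := by
      have hd := hcp (i-1) 2 3 (by omega) (by omega) (by omega)
      rw [show (i-1) + ((2:ℕ):ZMod n) = i+1 by push_cast; ring,
        show (i-1) + ((3:ℕ):ZMod n) = i+2 by push_cast; ring] at hd
      exact hd
    have D2 : 0 < det2 (V (i-2)) (V (i+1)) (V (i+2)) := by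
      have hd := hcp (i-2) 3 4 (by omega) (by omega) (by omega)
      rw [show (i-2) + ((3:ℕ):ZMod n) = i+1 by push_cast; ring,
        show (i-2) + ((4:ℕ):ZMod n) = i+2 by push_cast; ring] at hd
      exact hd
    have D3 : 0 < det2 (V (i-2)) (V (i-1)) (V (i+2)) := by
      have hd := hcp (i-2) 1 4 (by omega) (by omega) (by omega)
      rw [show (i-2) + ((1:ℕ):ZMod n) = i-1 by push_cast; ring,
        show (i-2) + ((4:ℕ):ZMod n) = i+2 by push_cast; ring] at hd
      exact hd
    have D4 : 0 < det2 (V (i-2)) (V (i-1)) (V (i+1)) := by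
      have hd := hcp (i-2) 1 3 (by omega) (by omega) (by omega)
      rw [show (i-2) + ((1:ℕ):ZMod n) = i-1 by push_cast; ring,
        show (i-2) + ((3:ℕ):ZMod n) = i+1 by push_cast; ring] at hd
      exact hd
    refine quadPt (V (i-2)) (V (i-1)) (V (i+1)) (V (i+2)) (O' 0) (O' (-1)) (R' 0) (R' (-1))
      D1 D2 D3 D4 ?_ ?_ ?_ ?_
    · have s1 := sq_of_dist_lt q1
      have s2 := sq_of_dist_eq cm11
      simp only [powDiff]; linarith
    · have s1 := sq_of_dist_eq c01
      have s2 := sq_of_dist_eq cm12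
      simp only [powDiff]; linarith
    · have s1 := sq_of_dist_eq c02
      have s2 := sq_of_dist_eq cm13
      simp only [powDiff]; linarith
    · have s1 := sq_of_dist_eq c03
      have s2 := sq_of_dist_lt q4
      simp only [powDiff]; linarith
  have htrans : ∀ k : ZMod (n-1), k ≠ 0 → k ≠ -1 →
      (GlobMin (removeVertex V i) O' R' k ↔ GlobMin V O R (ψ k)) := by
    intro k hk0 hk1
    obtain ⟨hOk, hRk⟩ := hOR k hk0 hk1
    have hmne_i : ψ k ≠ i := hψne_i k
    have hmne_ip1 : ψ k ≠ i + 1 := by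
      intro h; exact hk0 (hψinj (by rw [h, ← hψ0]))
    have hmne_im1 : ψ k ≠ i - 1 := by
      intro h; exact hk1 (hψinj (by rw [h, ← hψneg1]))
    have cA := (hcirc i).1
    have cB := (hcirc i).2.1
    have cC := (hcirc i).2.2
    constructor
    · intro hk'
      intro j hj1 hj2 hj3
      by_cases hji : j = i
      · rw [hji] at hj1 hj2 hj3 ⊢
        clear hji
        have hRm0 : 0 ≤ R (ψ k) := (hcirc (ψ k)).2.1 ▸ dist_nonneg
        rcases lt_trichotomy (dist (V i) (O (ψ k))) (R (ψ k)) with hlt | heq | hgt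
        · exact hlt
        · exfalso
          refine hgen.2 (ψ k - 1) (ψ k) (ψ k + 1) i ?_ ?_ ?_ ?_ ?_ ?_
            ⟨O (ψ k), R (ψ k), (hcirc (ψ k)).1, (hcirc (ψ k)).2.1,
              (hcirc (ψ k)).2.2, heq⟩
          · intro h; exact h1n (by linear_combination -h)
          · intro h; exact h2n (by linear_combination -h)
          · exact Ne.symm hj1
          · intro h; exact h1n (by linear_combination -h)
          · exact Ne.symm hj2
          · exact Ne.symm hj3
        · exfalso
          by_cases hk_1 : k = 1
          · -- ψ k = i + 2
            subst hk_1
            rw [hψ1] at hOk hRk hgt hmne_i hmne_ip1 hmne_im1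
            have hR2 : 0 ≤ R (i+2) := (hcirc (i+2)).2.1 ▸ dist_nonneg
            have d1 : 0 < det2 (V i) (V (i+1)) (V (i+2)) := by
              refine hedge i (i+2) ?_ ?_
              · intro h; exact h2n (by linear_combination h)
              · intro h; exact h1n (by linear_combination h)
            have d2 : 0 < det2 (V (i-1)) (V (i+1)) (V (i+2)) := by
              have hd := hcp (i-1) 2 3 (by omega) (by omega) (by omega)
              rw [show (i-1) + ((2:ℕ):ZMod n) = i+1 by push_cast; ring,
                show (i-1) + ((3:ℕ):ZMod n) = i+2 by push_cast; ring] at hd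
              exact hd
            have d3 : 0 < det2 (V (i-1)) (V i) (V (i+2)) := by
              have hd := hcp (i-1) 1 3 (by omega) (by omega) (by omega)
              rw [show (i-1) + ((1:ℕ):ZMod n) = i by push_cast; ring,
                show (i-1) + ((3:ℕ):ZMod n) = i+2 by push_cast; ring] at hd
              exact hd
            have d4 : 0 < det2 (V (i-1)) (V i) (V (i+1)) := by
              have hd := hcp (i-1) 1 2 (by omega) (by omega) (by omega)
              rw [show (i-1) + ((1:ℕ):ZMod n) = i by push_cast; ring,
                show (i-1) + ((2:ℕ):ZMod n) = i+1 by push_cast; ring] at hd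
              exact hd
            have q1 : dist (V (i-1)) (O (i+2)) < R (i+2) := by
              have := hk' (-1) ?_ ?_ ?_
              · rwa [e_m1, hOk, hRk] at this
              · intro h; exact h1m (by linear_combination -h)
              · intro h; exact h2m (by linear_combination -h)
              · intro h; exact h3m (by linear_combination -h)
            have q4 : dist (V (i+2)) (O i) < R i := by
              refine hi (i+2) ?_ ?_ ?_
              · intro h; exact h3n (by linear_combination h)
              · intro h; exact h2n (by linear_combination h)
              · intro h; exact h1n (by linear_combination h)
            have cM1 := (hcirc (i+2)).1
            rw [show i+2-1 = i+1 by ring] at cM1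
            have cM2 := (hcirc (i+2)).2.1
            refine quadPt (V (i-1)) (V i) (V (i+1)) (V (i+2)) (O (i+2)) (O i)
              (R (i+2)) (R i) d1 d2 d3 d4 ?_ ?_ ?_ ?_
            · have s1 := sq_of_dist_lt q1
              have s2 := sq_of_dist_eq cA
              simp only [powDiff]; linarith
            · have s1 := sq_of_dist_gt hR2 hgt
              have s2 := sq_of_dist_eq cB
              simp only [powDiff]; linarith
            · have s1 := sq_of_dist_eq cM1
              have s2 := sq_of_dist_eq cC
              simp only [powDiff]; linarith
            · have s1 := sq_of_dist_eq cM2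
              have s2 := sq_of_dist_lt q4
              simp only [powDiff]; linarith
          · by_cases hk_2 : k = -2
            · -- ψ k = i - 2
              subst hk_2
              rw [hψneg2] at hOk hRk hgt hmne_i hmne_ip1 hmne_im1
              have hR2 : 0 ≤ R (i-2) := (hcirc (i-2)).2.1 ▸ dist_nonneg
              have d1 : 0 < det2 (V (i-1)) (V i) (V (i+1)) := by
                have hd := hcp (i-1) 1 2 (by omega) (by omega) (by omega)
                rw [show (i-1) + ((1:ℕ):ZMod n) = i by push_cast; ring,
                  show (i-1) + ((2:ℕ):ZMod n) = i+1 by push_cast; ring] at hd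
                exact hd
              have d2 : 0 < det2 (V (i-2)) (V i) (V (i+1)) := by
                have hd := hcp (i-2) 2 3 (by omega) (by omega) (by omega)
                rw [show (i-2) + ((2:ℕ):ZMod n) = i by push_cast; ring,
                  show (i-2) + ((3:ℕ):ZMod n) = i+1 by push_cast; ring] at hd
                exact hd
              have d3 : 0 < det2 (V (i-2)) (V (i-1)) (V (i+1)) := by
                have hd := hcp (i-2) 1 3 (by omega) (by omega) (by omega)
                rw [show (i-2) + ((1:ℕ):ZMod n) = i-1 by push_cast; ring,
                  show (i-2) + ((3:ℕ):ZMod n) = i+1 by push_cast; ring] at hd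
                exact hd
              have d4 : 0 < det2 (V (i-2)) (V (i-1)) (V i) := by
                have hd := hcp (i-2) 1 2 (by omega) (by omega) (by omega)
                rw [show (i-2) + ((1:ℕ):ZMod n) = i-1 by push_cast; ring,
                  show (i-2) + ((2:ℕ):ZMod n) = i by push_cast; ring] at hd
                exact hd
              have q1 : dist (V (i-2)) (O i) < R i := by
                refine hi (i-2) ?_ ?_ ?_
                · intro h; exact h1n (by linear_combination -h)
                · intro h; exact h2n (by linear_combination -h)
                · intro h; exact h3n (by linear_combination -h)
              have q4 : dist (V (i+1)) (O (i-2)) < R (i-2) := by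
                have := hk' 0 ?_ ?_ ?_
                · rwa [e_0, hOk, hRk] at this
                · intro h; exact h3m (by linear_combination h)
                · intro h; exact h2m (by linear_combination h)
                · intro h; exact h1m (by linear_combination h)
              have cM1 := (hcirc (i-2)).2.1
              have cM2 := (hcirc (i-2)).2.2
              rw [show i-2+1 = i-1 by ring] at cM2
              refine quadPt (V (i-2)) (V (i-1)) (V i) (V (i+1)) (O i) (O (i-2))
                (R i) (R (i-2)) d1 d2 d3 d4 ?_ ?_ ?_ ?_
              · have s1 := sq_of_dist_lt q1
                have s2 := sq_of_dist_eq cM1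
                simp only [powDiff]; linarith
              · have s1 := sq_of_dist_eq cA
                have s2 := sq_of_dist_eq cM2
                simp only [powDiff]; linarith
              · have s1 := sq_of_dist_eq cB
                have s2 := sq_of_dist_gt hR2 hgt
                simp only [powDiff]; linarith
              · have s1 := sq_of_dist_eq cC
                have s2 := sq_of_dist_lt q4
                simp only [powDiff]; linarith
            · -- general position of ψ k
              set m := ψ k with hmdef
              set u := (m - i + 1).val with hudef
              have hu_cast : ((u : ℕ) : ZMod n) = m - i + 1 := ZMod.natCast_zmod_val _
              have hu_lt : u < n := ZMod.val_lt _
              have hu0 : u ≠ 0 := by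
                intro h; rw [h] at hu_cast
                exact hmne_im1 (by linear_combination -hu_cast)
              have hu1 : u ≠ 1 := by
                intro h; rw [h] at hu_cast
                exact hmne_i (by push_cast at hu_cast; linear_combination -hu_cast)
              have hu2 : u ≠ 2 := by
                intro h; rw [h] at hu_cast
                exact hmne_ip1 (by push_cast at hu_cast; linear_combination -hu_cast)
              have hRm : 0 ≤ R m := (hcirc m).2.1 ▸ dist_nonneg
              have g1 : 0 < det2 (V i) (V (i+1)) (V m) := hedge i m hmne_i hmne_ip1
              have g2 : 0 < det2 (V (i-1)) (V (i+1)) (V m) := by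
                have hd := hcp (i-1) 2 u (by omega) (by omega) (by omega)
                rw [show (i-1) + ((2:ℕ):ZMod n) = i+1 by push_cast; ring,
                  show (i-1) + ((u:ℕ):ZMod n) = m by rw [hu_cast]; ring] at hd
                exact hd
              have g3 : 0 < det2 (V (i-1)) (V i) (V m) := by
                have hd := hedge (i-1) m hmne_im1 ?_
                · rwa [show i-1+1 = i by ring] at hd
                · rw [show i-1+1 = i by ring]; exact hmne_i
              have g4 : 0 < det2 (V (i-1)) (V i) (V (i+1)) := by
                have hd := hcp (i-1) 1 2 (by omega) (by omega) (by omega)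
                rw [show (i-1) + ((1:ℕ):ZMod n) = i by push_cast; ring,
                  show (i-1) + ((2:ℕ):ZMod n) = i+1 by push_cast; ring] at hd
                exact hd
              have q1 : dist (V (i-1)) (O m) < R m := by
                have := hk' (-1) ?_ ?_ ?_
                · rwa [e_m1, hOk, hRk] at this
                · intro h; exact hk0 (by linear_combination -h)
                · exact Ne.symm hk1
                · intro h; exact hk_2 (by linear_combination -h)
              have q3 : dist (V (i+1)) (O m) < R m := by
                have := hk' 0 ?_ ?_ ?_
                · rwa [e_0, hOk, hRk] at this
                · intro h; exact hk_1 (by linear_combination -h)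
                · exact Ne.symm hk0
                · intro h; exact hk1 (by linear_combination -h)
              have q4 : dist (V m) (O i) < R i := hi m hmne_im1 hmne_i hmne_ip1
              refine quadPt (V (i-1)) (V i) (V (i+1)) (V m) (O m) (O i) (R m) (R i)
                g1 g2 g3 g4 ?_ ?_ ?_ ?_
              · have s1 := sq_of_dist_lt q1
                have s2 := sq_of_dist_eq cA
                simp only [powDiff]; linarith
              · have s1 := sq_of_dist_gt hRm hgt
                have s2 := sq_of_dist_eq cB
                simp only [powDiff]; linarith
              · have s1 := sq_of_dist_lt q3
                have s2 := sq_of_dist_eq cC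
                simp only [powDiff]; linarith
              · have s1 := sq_of_dist_eq ((hcirc m).2.1)
                have s2 := sq_of_dist_lt q4
                simp only [powDiff]; linarith
      · obtain ⟨kj, hkj⟩ := hψsurj j hji
        have hkj1 : kj ≠ k - 1 := by
          intro h; exact hj1 (by rw [← hkj, h, hψpred k hk0])
        have hkj2 : kj ≠ k := by
          intro h; exact hj2 (by rw [← hkj, h])
        have hkj3 : kj ≠ k + 1 := by
          intro h; exact hj3 (by rw [← hkj, h, hψsucc k hk1])
        have := hk' kj hkj1 hkj2 hkj3
        rwa [hV', hkj, hOk, hRk] at this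
    · intro hm j' hj1 hj2 hj3
      rw [hV', hOk, hRk]
      refine hm (ψ j') ?_ ?_ ?_
      · intro h; exact hj1 (hψinj (h.trans (hψpred k hk0).symm))
      · intro h; exact hj2 (hψinj h)
      · intro h; exact hj3 (hψinj (h.trans (hψsucc k hk1).symm))
  -- counting
  set T : Set (ZMod n) := {k | GlobMin V O R k} with hT
  set T' : Set (ZMod (n-1)) := {k | GlobMin (removeVertex V i) O' R' k} with hT'
  have hiT : i ∈ T := hi
  have hset : T \ {i} = ψ '' (T' \ {0, -1}) := by
    ext m
    constructor
    · intro hmem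
      obtain ⟨hmT, hmi⟩ := hmem
      have hmi' : m ≠ i := hmi
      have hm_ip1 : m ≠ i + 1 := by
        intro h; rw [hT, Set.mem_setOf_eq, h] at hmT; exact hip1 hmT
      have hm_im1 : m ≠ i - 1 := by
        intro h; rw [hT, Set.mem_setOf_eq, h] at hmT; exact him1 hmT
      obtain ⟨k, hk⟩ := hψsurj m hmi'
      have hk0 : k ≠ 0 := by intro h; rw [h, hψ0] at hk; exact hm_ip1 hk.symm
      have hk1 : k ≠ -1 := by intro h; rw [h, hψneg1] at hk; exact hm_im1 hk.symm
      have memT' : k ∈ T' := by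
        rw [hT', Set.mem_setOf_eq]
        exact (htrans k hk0 hk1).mpr (by rw [hk]; exact hmT)
      have hnotin : k ∉ ({0, -1} : Set (ZMod (n-1))) := by
        intro hc
        simp only [Set.mem_insert_iff, Set.mem_singleton_iff] at hc
        rcases hc with rfl | rfl
        · exact hk0 rfl
        · exact hk1 rfl
      exact ⟨k, ⟨memT', hnotin⟩, hk⟩
    · rintro ⟨k, hkmem, rfl⟩
      obtain ⟨hkT', hknot⟩ := hkmem
      simp only [Set.mem_insert_iff, Set.mem_singleton_iff, not_or] at hknot
      refine ⟨?_, hψne_i k⟩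
      rw [hT, Set.mem_setOf_eq]
      exact (htrans k hknot.1 hknot.2).mp hkT'
  have hfinT : T.Finite := Set.toFinite _
  have hfinT' : T'.Finite := Set.toFinite _
  have hcard1 : (T \ {i}).ncard + 1 = T.ncard :=
    Set.ncard_diff_singleton_add_one hiT hfinT
  have hcard2 : (ψ '' (T' \ {0, -1})).ncard = (T' \ {0, -1}).ncard :=
    Set.ncard_image_of_injective _ hψinj
  by_cases c0 : (0 : ZMod (n-1)) ∈ T'
  · have c1 : (-1 : ZMod (n-1)) ∉ T' := fun hc => hboth ⟨c0, hc⟩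
    have hdiff : T' \ {0, -1} = T' \ {0} := by
      ext x
      simp only [Set.mem_diff, Set.mem_insert_iff, Set.mem_singleton_iff, not_or]
      constructor
      · rintro ⟨hx, h0x, h1x⟩; exact ⟨hx, h0x⟩
      · rintro ⟨hx, h0x⟩; exact ⟨hx, h0x, fun h => c1 (h ▸ hx)⟩
    have hcard3 : (T' \ {0}).ncard + 1 = T'.ncard :=
      Set.ncard_diff_singleton_add_one c0 hfinT'
    left
    rw [← hcard1, hset, hcard2, hdiff]
    exact hcard3
  · by_cases c1 : (-1 : ZMod (n-1)) ∈ T'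
    · have hdiff : T' \ {0, -1} = T' \ {-1} := by
        ext x
        simp only [Set.mem_diff, Set.mem_insert_iff, Set.mem_singleton_iff, not_or]
        constructor
        · rintro ⟨hx, h0x, h1x⟩; exact ⟨hx, h1x⟩
        · rintro ⟨hx, h1x⟩; exact ⟨hx, fun h => c0 (h ▸ hx), h1x⟩
      have hcard3 : (T' \ {-1}).ncard + 1 = T'.ncard :=
        Set.ncard_diff_singleton_add_one c1 hfinT'
      left
      rw [← hcard1, hset, hcard2, hdiff]
      exact hcard3
    · have hdiff : T' \ {0, -1} = T' := by
        ext x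
        simp only [Set.mem_diff, Set.mem_insert_iff, Set.mem_singleton_iff, not_or]
        constructor
        · rintro ⟨hx, _⟩; exact hx
        · intro hx
          exact ⟨hx, fun h => c0 (h ▸ hx), fun h => c1 (h ▸ hx)⟩
      right
      rw [← hcard1, hset, hcard2, hdiff]
end

section
/- Let P be a generic convex polygon with n ≥ 5 vertices, let V_i be a locally maximal-extremal vertex of P, and let X be a vertex of P adjacent to V_{i-1} or to V_{i+1} with X ≠ V_i (i.e. X = V_{i-2} or X = V_{i+2}). Let P′ be the polygon obtained from P by removing the vertex V_i and joining V_{i-1} and V_{i+1} by an edge. If X is locally maximal-extremal in P′, then X is locally maximal-extremal in P. -/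
open EuclideanGeometry
open scoped Classical

/-! ### Auxiliary lemmas -/

section AuxLemmas

lemma dist_sq_eq (x y : Pt) : dist x y ^ 2 = (x 0 - y 0)^2 + (x 1 - y 1)^2 := by
  rw [EuclideanSpace.dist_eq, Real.sq_sqrt (by positivity)]
  simp [Fin.sum_univ_two, Real.dist_eq, sq_abs]

lemma det2_swap (a b c : Pt) : det2 b a c = - det2 a b c := by
  unfold det2; ring

/-- Core identity: power of `b` w.r.t. the second circle, Cramer style. -/
lemma key_iden (a b c d O O' : Pt) (R R' : ℝ)
    (h1 : dist a O = R) (h2 : dist b O = R) (h3 : dist c O = R)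
    (h4 : dist c O' = R') (h5 : dist d O' = R') :
    det2 c d a * (dist b O' ^ 2 - R' ^ 2)
      = det2 c d b * (dist a O' ^ 2 - R' ^ 2)
        + det2 a b c * (dist d O ^ 2 - R ^ 2) := by
  have H1 : (a 0 - O 0)^2 + (a 1 - O 1)^2 = R^2 := by rw [← dist_sq_eq, h1]
  have H2 : (b 0 - O 0)^2 + (b 1 - O 1)^2 = R^2 := by rw [← dist_sq_eq, h2]
  have H3 : (c 0 - O 0)^2 + (c 1 - O 1)^2 = R^2 := by rw [← dist_sq_eq, h3]
  have H4 : (c 0 - O' 0)^2 + (c 1 - O' 1)^2 = R'^2 := by rw [← dist_sq_eq, h4]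
  have H5 : (d 0 - O' 0)^2 + (d 1 - O' 1)^2 = R'^2 := by rw [← dist_sq_eq, h5]
  rw [dist_sq_eq b O', dist_sq_eq a O', dist_sq_eq d O]
  unfold det2
  linear_combination ((b 0-c 0)*(d 1-c 1)-(b 1-c 1)*(d 0-c 0)) * H1
    - ((a 0-c 0)*(d 1-c 1)-(a 1-c 1)*(d 0-c 0)) * H2
    + ((b 0-c 0)*(a 1-c 1)-(b 1-c 1)*(a 0-c 0)) * H5
    + (((b 0-c 0)*(d 1-c 1)-(b 1-c 1)*(d 0-c 0))
       - ((a 0-c 0)*(d 1-c 1)-(a 1-c 1)*(d 0-c 0))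
       - ((b 0-c 0)*(a 1-c 1)-(b 1-c 1)*(a 0-c 0))) * (H4 - H3)

/-- The key geometric step.  `a b c d` consecutive vertices (either orientation,
recorded by the sign `ε`), circle `(O,R)` through `a,b,c`, circle `(O',R')` through
`c,d`; if `d` is strictly outside the first circle and `a` strictly outside the
second, then `b` is strictly outside the second. -/
lemma key_step (ε : ℝ) (a b c d O O' : Pt) (R R' : ℝ)
    (h1 : dist a O = R) (h2 : dist b O = R) (h3 : dist c O = R)
    (h4 : dist c O' = R') (h5 : dist d O' = R')
    (e1 : 0 < ε * det2 c d a) (e2 : 0 < ε * det2 c d b) (e3 : 0 < ε * det2 a b c)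
    (hd : R < dist d O) (ha : R' < dist a O') : R' < dist b O' := by
  have hR : 0 ≤ R := h1 ▸ dist_nonneg
  have hR' : 0 ≤ R' := h4 ▸ dist_nonneg
  have hd2 : 0 < dist d O ^ 2 - R ^ 2 := by nlinarith
  have ha2 : 0 < dist a O' ^ 2 - R' ^ 2 := by nlinarith
  have key := key_iden a b c d O O' R R' h1 h2 h3 h4 h5
  have keyε : (ε * det2 c d a) * (dist b O' ^ 2 - R' ^ 2)
      = (ε * det2 c d b) * (dist a O' ^ 2 - R' ^ 2)
        + (ε * det2 a b c) * (dist d O ^ 2 - R ^ 2) := by linear_combination ε * key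
  have hmain : 0 < (ε * det2 c d a) * (dist b O' ^ 2 - R' ^ 2) := by
    rw [keyε]
    have := mul_pos e2 ha2
    have := mul_pos e3 hd2
    linarith
  have hGb : 0 < dist b O' ^ 2 - R' ^ 2 := by
    by_contra h
    push_neg at h
    have := mul_nonpos_of_nonneg_of_nonpos (le_of_lt e1) h
    linarith
  nlinarith [dist_nonneg (x := b) (y := O')]

/-- Uniqueness of the circle through three non-collinear points. -/
lemma circ_unique (p q r O O' : Pt) (R R' : ℝ)
    (hp : dist p O = R) (hq : dist q O = R) (hr : dist r O = R)
    (hp' : dist p O' = R') (hq' : dist q O' = R') (hr' : dist r O' = R')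
    (hdet : det2 p q r ≠ 0) : O = O' ∧ R = R' := by
  have Hp : (p 0 - O 0)^2 + (p 1 - O 1)^2 = R^2 := by rw [← dist_sq_eq, hp]
  have Hq : (q 0 - O 0)^2 + (q 1 - O 1)^2 = R^2 := by rw [← dist_sq_eq, hq]
  have Hr : (r 0 - O 0)^2 + (r 1 - O 1)^2 = R^2 := by rw [← dist_sq_eq, hr]
  have Hp' : (p 0 - O' 0)^2 + (p 1 - O' 1)^2 = R'^2 := by rw [← dist_sq_eq, hp']
  have Hq' : (q 0 - O' 0)^2 + (q 1 - O' 1)^2 = R'^2 := by rw [← dist_sq_eq, hq']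
  have Hr' : (r 0 - O' 0)^2 + (r 1 - O' 1)^2 = R'^2 := by rw [← dist_sq_eq, hr']
  have hdet' : (q 0 - p 0) * (r 1 - p 1) - (q 1 - p 1) * (r 0 - p 0) ≠ 0 := hdet
  have hX : det2 p q r * (O 0 - O' 0) = 0 := by
    unfold det2
    linear_combination ((r 1 - p 1)/2) * (Hp - Hp') - ((r 1 - p 1)/2) * (Hq - Hq')
      - ((q 1 - p 1)/2) * (Hp - Hp') + ((q 1 - p 1)/2) * (Hr - Hr')
  have hY : det2 p q r * (O 1 - O' 1) = 0 := by
    unfold det2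
    linear_combination (-(r 0 - p 0)/2) * (Hp - Hp') + ((r 0 - p 0)/2) * (Hq - Hq')
      + ((q 0 - p 0)/2) * (Hp - Hp') - ((q 0 - p 0)/2) * (Hr - Hr')
  have hX0 : O 0 = O' 0 := by
    rcases mul_eq_zero.mp hX with h | h
    · exact absurd h hdet
    · linarith
  have hY0 : O 1 = O' 1 := by
    rcases mul_eq_zero.mp hY with h | h
    · exact absurd h hdet
    · linarith
  have hOO : O = O' := by
    ext j
    fin_cases j
    · exact hX0
    · exact hY0
  refine ⟨hOO, ?_⟩
  rw [← hp, hOO, hp']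

variable {n : ℕ} [NeZero n]

lemma rv_pos (hn : 5 ≤ n) (V : ZMod n → Pt) (i : ZMod n) (k : ℕ) (hk : k < n - 1) :
    removeVertex V i ((k : ℕ) : ZMod (n-1)) = V (i + 1 + (k : ZMod n)) := by
  unfold removeVertex
  rw [ZMod.val_natCast_of_lt hk]

lemma rv_neg (hn : 5 ≤ n) (V : ZMod n → Pt) (i : ZMod n) (j : ℕ)
    (hj1 : 1 ≤ j) (hjn : j + 1 ≤ n) :
    removeVertex V i (-((j : ℕ) : ZMod (n-1))) = V (i - (j : ZMod n)) := by
  have hcast : ((n - 1 - j : ℕ) : ZMod (n-1)) = -((j : ℕ) : ZMod (n-1)) := by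
    rw [Nat.cast_sub (by omega : j ≤ n - 1), ZMod.natCast_self, zero_sub]
  rw [← hcast]
  unfold removeVertex
  rw [ZMod.val_natCast_of_lt (by omega : n - 1 - j < n - 1)]
  congr 1
  rw [show (n - 1 - j : ℕ) = n - (1 + j) by omega,
    Nat.cast_sub (by omega : 1 + j ≤ n), ZMod.natCast_self]
  push_cast
  ring

end AuxLemmas

/-- Let `V i` be locally maximal-extremal in a generic convex polygon `P` with `n ≥ 5`
vertices, and let `P'` be obtained by removing `V i`.  If a second neighbor
`X ∈ {V (i+2), V (i-2)}` of `V i` (i.e. a neighbor of `V (i+1)` or `V (i-1)` other than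
`V i`) is locally maximal-extremal in `P'`, then it is locally maximal-extremal in `P`.
In `P' = removeVertex V i`, the vertex `V (i+2)` has index `1` and the vertex
`V (i-2)` has index `-2`. -/
theorem neighbor_stays_locally_maximal
    (n : ℕ) [NeZero n] [NeZero (n - 1)] (hn : 5 ≤ n)
    (V O : ZMod n → Pt) (R : ZMod n → ℝ)
    (hconv : ConvexCCW V) (hgen : GenericPoly V) (hcirc : IsCircumData V O R)
    (i : ZMod n) (hi : LocMax V O R i)
    (O' : ZMod (n - 1) → Pt) (R' : ZMod (n - 1) → ℝ)
    (hcirc' : IsCircumData (removeVertex V i) O' R') :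
    (LocMax (removeVertex V i) O' R' 1 → LocMax V O R (i + 2)) ∧
    (LocMax (removeVertex V i) O' R' (-2) → LocMax V O R (i - 2)) := by
  -- nonzero small numerals in `ZMod n`
  have hnzN : ∀ k : ℕ, 0 < k → k < n → ((k : ℕ) : ZMod n) ≠ 0 := by
    intro k hk1 hk2 h
    have hd := (ZMod.natCast_eq_zero_iff k n).mp h
    have := Nat.le_of_dvd hk1 hd
    omega
  have h1 : (1 : ZMod n) ≠ 0 := by simpa using hnzN 1 (by norm_num) (by omega)
  have h2 : (2 : ZMod n) ≠ 0 := by simpa using hnzN 2 (by norm_num) (by omega)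
  have h3 : (3 : ZMod n) ≠ 0 := by simpa using hnzN 3 (by norm_num) (by omega)
  -- removeVertex computations
  have rv0 : removeVertex V i 0 = V (i + 1) := by
    have h := rv_pos hn V i 0 (by omega); norm_num at h; exact h
  have rv1 : removeVertex V i 1 = V (i + 2) := by
    have h := rv_pos hn V i 1 (by omega); norm_num at h
    rw [show i + 1 + (1 : ZMod n) = i + 2 from by ring] at h; exact h
  have rv2 : removeVertex V i 2 = V (i + 3) := by
    have h := rv_pos hn V i 2 (by omega); norm_num at h
    rw [show i + 1 + (2 : ZMod n) = i + 3 from by ring] at h; exact h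
  have rv3 : removeVertex V i 3 = V (i + 4) := by
    have h := rv_pos hn V i 3 (by omega); norm_num at h
    rw [show i + 1 + (3 : ZMod n) = i + 4 from by ring] at h; exact h
  have rvm1 : removeVertex V i (-1) = V (i - 1) := by
    have h := rv_neg hn V i 1 (by omega) (by omega); norm_num at h; exact h
  have rvm2 : removeVertex V i (-2) = V (i - 2) := by
    have h := rv_neg hn V i 2 (by omega) (by omega); norm_num at h; exact h
  have rvm3 : removeVertex V i (-3) = V (i - 3) := by
    have h := rv_neg hn V i 3 (by omega) (by omega); norm_num at h; exact h
  have rvm4 : removeVertex V i (-4) = V (i - 4) := by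
    have h := rv_neg hn V i 4 (by omega) (by omega); norm_num at h; exact h
  obtain ⟨ci1, ci2, ci3⟩ := hcirc i
  constructor
  · -- the vertex `V (i+2)`
    intro hmax
    obtain ⟨cA, cB, cC⟩ := hcirc (i + 2)
    rw [show i + 2 - 1 = i + 1 from by ring] at cA
    rw [show i + 2 + 1 = i + 3 from by ring] at cC
    obtain ⟨c'A, c'B, c'C⟩ := hcirc' 1
    rw [show (1 : ZMod (n-1)) - 1 = 0 from by ring, rv0] at c'A
    rw [rv1] at c'B
    rw [show (1 : ZMod (n-1)) + 1 = 2 from by ring, rv2] at c'C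
    have hdet123 : 0 < det2 (V (i+1)) (V (i+2)) (V (i+3)) := by
      have h := hconv.2 (i+1) (i+3)
        (by intro h; exact h2 (by linear_combination h))
        (by intro h; exact h1 (by linear_combination h))
      rwa [show i + 1 + 1 = i + 2 from by ring] at h
    obtain ⟨hO, hR⟩ := circ_unique (V (i+1)) (V (i+2)) (V (i+3))
      (O' 1) (O (i+2)) (R' 1) (R (i+2)) c'A c'B c'C cA cB cC (ne_of_gt hdet123)
    obtain ⟨hL, hRt⟩ := hmax
    rw [show (1 : ZMod (n-1)) - 2 = -1 from by ring, rvm1, hO, hR] at hL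
    rw [show (1 : ZMod (n-1)) + 2 = 3 from by ring, rv3, hO, hR] at hRt
    constructor
    · rw [show i + 2 - 2 = i from by ring]
      refine key_step 1 (V (i-1)) (V i) (V (i+1)) (V (i+2)) (O i) (O (i+2))
        (R i) (R (i+2)) ci1 ci2 ci3 cA cB ?_ ?_ ?_ hi.2 hL
      · rw [one_mul]
        have h := hconv.2 (i+1) (i-1)
          (by intro h; exact h2 (by linear_combination -h))
          (by intro h; exact h3 (by linear_combination -h))
        rwa [show i + 1 + 1 = i + 2 from by ring] at h
      · rw [one_mul]
        have h := hconv.2 (i+1) i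
          (by intro h; exact h1 (by linear_combination -h))
          (by intro h; exact h2 (by linear_combination -h))
        rwa [show i + 1 + 1 = i + 2 from by ring] at h
      · rw [one_mul]
        have h := hconv.2 (i-1) (i+1)
          (by intro h; exact h2 (by linear_combination h))
          (by intro h; exact h1 (by linear_combination h))
        rwa [show i - 1 + 1 = i from by ring] at h
    · rw [show i + 2 + 2 = i + 4 from by ring]
      exact hRt
  · -- the vertex `V (i-2)`
    intro hmax
    obtain ⟨cA, cB, cC⟩ := hcirc (i - 2)
    rw [show i - 2 - 1 = i - 3 from by ring] at cA
    rw [show i - 2 + 1 = i - 1 from by ring] at cC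
    obtain ⟨c'A, c'B, c'C⟩ := hcirc' (-2)
    rw [show (-2 : ZMod (n-1)) - 1 = -3 from by ring, rvm3] at c'A
    rw [rvm2] at c'B
    rw [show (-2 : ZMod (n-1)) + 1 = -1 from by ring, rvm1] at c'C
    have hdet123 : 0 < det2 (V (i-3)) (V (i-2)) (V (i-1)) := by
      have h := hconv.2 (i-3) (i-1)
        (by intro h; exact h2 (by linear_combination h))
        (by intro h; exact h1 (by linear_combination h))
      rwa [show i - 3 + 1 = i - 2 from by ring] at h
    obtain ⟨hO, hR⟩ := circ_unique (V (i-3)) (V (i-2)) (V (i-1))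
      (O' (-2)) (O (i-2)) (R' (-2)) (R (i-2)) c'A c'B c'C cA cB cC (ne_of_gt hdet123)
    obtain ⟨hL, hRt⟩ := hmax
    rw [show (-2 : ZMod (n-1)) - 2 = -4 from by ring, rvm4, hO, hR] at hL
    rw [show (-2 : ZMod (n-1)) + 2 = 0 from by ring, rv0, hO, hR] at hRt
    constructor
    · rw [show i - 2 - 2 = i - 4 from by ring]
      exact hL
    · rw [show i - 2 + 2 = i from by ring]
      refine key_step (-1) (V (i+1)) (V i) (V (i-1)) (V (i-2)) (O i) (O (i-2))
        (R i) (R (i-2)) ci3 ci2 ci1 cC cB ?_ ?_ ?_ hi.1 hRt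
      · have h := hconv.2 (i-2) (i+1)
          (by intro h; exact h3 (by linear_combination h))
          (by intro h; exact h2 (by linear_combination h))
        rw [show i - 2 + 1 = i - 1 from by ring] at h
        have hsw := det2_swap (V (i-2)) (V (i-1)) (V (i+1))
        linarith
      · have h := hconv.2 (i-2) i
          (by intro h; exact h2 (by linear_combination h))
          (by intro h; exact h1 (by linear_combination h))
        rw [show i - 2 + 1 = i - 1 from by ring] at h
        have hsw := det2_swap (V (i-2)) (V (i-1)) (V i)
        linarith
      · have h := hconv.2 i (i-1)
          (by intro h; exact h1 (by linear_combination -h))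
          (by intro h; exact h2 (by linear_combination -h))
        have hsw := det2_swap (V i) (V (i+1)) (V (i-1))
        linarith
end
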